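/- Let N ≥ 2, let φ be an A_N-positive primitive automorphism of the free group F_N, let w ∈ F_N, k ≥ 1, and set ψ = i_w ∘ φ^k. Let u ∈ F_N be ψ-reduced, with reduced word u_0 … u_p, and let v ∈ F_N be nonempty with ψ(v) = v such that neither u nor u^{-1} is a prefix of v and neither u nor u^{-1} is a suffix of v. Then there exists a nonempty v''' ∈ F_N such that u·v·u^{-1} = u_0 * v''' * u_0^{-1}; that is, the reduced word of u v u^{-1} is the single letter u_0, followed by the reduced word of v''', followed by the single letter u_0^{-1}. (Lemma "case3safety" of the paper.) -/

import Mathlib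

/-- A word of the free group is pure positive if its reduced word is nonempty
and all its letters are positive. -/
def PurePos {N : ℕ} (v : FreeGroup (Fin N)) : Prop :=
  v.toWord ≠ [] ∧ ∀ l ∈ v.toWord, l.2 = true

/-- A word of the free group is pure negative if its reduced word is nonempty
and all its letters are negative. -/
def PureNeg {N : ℕ} (v : FreeGroup (Fin N)) : Prop :=
  v.toWord ≠ [] ∧ ∀ l ∈ v.toWord, l.2 = false

/-- An automorphism of the free group is `A_N`-positive if the image of each
generator is pure positive. -/
def IsPositive {N : ℕ} (φ : MulAut (FreeGroup (Fin N))) : Prop :=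
  ∀ a : Fin N, PurePos (φ (FreeGroup.of a))

/-- An `A_N`-positive automorphism is primitive if some power sends each generator
to a word containing every positive letter. -/
def IsPrimitive {N : ℕ} (φ : MulAut (FreeGroup (Fin N))) : Prop :=
  ∃ k : ℕ, 1 ≤ k ∧ ∀ a b : Fin N, (b, true) ∈ ((φ ^ k) (FreeGroup.of a)).toWord

/-- `x * y` is cancellation-free: the reduced word of the product is the
concatenation of the reduced words. -/
def NoCancel {N : ℕ} (x y : FreeGroup (Fin N)) : Prop :=
  (x * y).toWord = x.toWord ++ y.toWord

/-- `x` is a prefix of `v`: `v = x * y` without cancellation. -/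
def IsPrefixOf {N : ℕ} (x v : FreeGroup (Fin N)) : Prop :=
  ∃ y, v = x * y ∧ NoCancel x y

/-- `x` is a suffix of `v`: `v = y * x` without cancellation. -/
def IsSuffixOf {N : ℕ} (x v : FreeGroup (Fin N)) : Prop :=
  ∃ y, v = y * x ∧ NoCancel y x

/-- `u` is `ψ`-reduced: `u` is nontrivial and fixed by `ψ`, cyclically reduced,
its first and last letters have opposite signs, and no nonempty strict prefix
or suffix of `u` is fixed by `ψ`. -/
def PsiReduced {N : ℕ} (ψ : FreeGroup (Fin N) → FreeGroup (Fin N))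
    (u : FreeGroup (Fin N)) : Prop :=
  u ≠ 1 ∧ ψ u = u ∧
  (∀ f l : Fin N × Bool, u.toWord.head? = some f → u.toWord.getLast? = some l →
    l ≠ (f.1, !f.2) ∧ l.2 = !f.2) ∧
  (∀ x, x ≠ 1 → x ≠ u → IsPrefixOf x u → ψ x ≠ x) ∧
  (∀ x, x ≠ 1 → x ≠ u → IsSuffixOf x u → ψ x ≠ x)

namespace Case3Aux

variable {α : Type*} [DecidableEq α]

/-- Local reducedness predicate on words. -/
def Rd (l : List (α × Bool)) : Prop :=
  List.Chain' (fun a b => b ≠ (a.1, !a.2)) l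

theorem rd_reduce (l : List (α × Bool)) : Rd (FreeGroup.reduce l) := by
  induction l with
  | nil => exact List.isChain_nil
  | cons x t ih =>
    rw [FreeGroup.reduce.cons]
    rcases h : FreeGroup.reduce t with _ | ⟨hd, tl⟩
    · simp [Rd, List.Chain']
    · rw [h] at ih
      by_cases hc : x.1 = hd.1 ∧ x.2 = !hd.2
      · simp only [hc, if_true]
        exact ih.tail
      · simp only [hc, if_false]
        refine List.IsChain.cons_cons ?_ ih
        intro he
        apply hc
        subst he
        exact ⟨rfl, by simp⟩

theorem reduce_eq_self_of_rd {l : List (α × Bool)} (h : Rd l) : FreeGroup.reduce l = l := by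
  induction l with
  | nil => rfl
  | cons x t ih =>
    have ht : FreeGroup.reduce t = t := ih h.tail
    rw [FreeGroup.reduce.cons, ht]
    rcases t with _ | ⟨hd, tl⟩
    · rfl
    · have hne : hd ≠ (x.1, !x.2) := (List.isChain_cons_cons.mp h).1
      have hc : ¬(x.1 = hd.1 ∧ x.2 = !hd.2) := by
        rintro ⟨h1, h2⟩
        apply hne
        have : hd.2 = !x.2 := by rw [h2]; simp
        rw [h1]
        exact Prod.ext rfl this
      simp only [hc, if_false]

theorem rd_toWord (x : FreeGroup α) : Rd x.toWord := by
  rw [← FreeGroup.reduce_toWord]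
  exact rd_reduce _

theorem toWord_mk_of_rd {l : List (α × Bool)} (h : Rd l) : (FreeGroup.mk l).toWord = l := by
  rw [FreeGroup.toWord_mk, reduce_eq_self_of_rd h]

omit [DecidableEq α] in
theorem rd_infix {l m : List (α × Bool)} (h : Rd l) (h' : m <:+: l) : Rd m :=
  List.IsChain.infix h h'

/-- Splitting an element along a decomposition of its reduced word. -/
theorem split_of_toWord_eq_append {x : FreeGroup α} {l m : List (α × Bool)}
    (h : x.toWord = l ++ m) :
    x = FreeGroup.mk l * FreeGroup.mk m ∧ (FreeGroup.mk l).toWord = l ∧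
      (FreeGroup.mk m).toWord = m := by
  have hrd : Rd (l ++ m) := h ▸ rd_toWord x
  have hl : Rd l := rd_infix hrd ⟨[], m, by simp⟩
  have hm : Rd m := rd_infix hrd ⟨l, [], by simp⟩
  refine ⟨?_, toWord_mk_of_rd hl, toWord_mk_of_rd hm⟩
  rw [FreeGroup.mul_mk, ← h, FreeGroup.mk_toWord]

theorem isPrefixOf_of_prefix {N : ℕ} {x v : FreeGroup (Fin N)} (h : x.toWord <+: v.toWord) :
    IsPrefixOf x v := by
  obtain ⟨r, hr⟩ := h
  obtain ⟨h1, _, h3⟩ := split_of_toWord_eq_append hr.symm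
  rw [FreeGroup.mk_toWord] at h1
  exact ⟨FreeGroup.mk r, h1, by rw [NoCancel, ← h1, hr.symm, h3]⟩

theorem isSuffixOf_of_suffix {N : ℕ} {x v : FreeGroup (Fin N)} (h : x.toWord <:+ v.toWord) :
    IsSuffixOf x v := by
  obtain ⟨r, hr⟩ := h
  obtain ⟨h1, h2, _⟩ := split_of_toWord_eq_append hr.symm
  rw [FreeGroup.mk_toWord] at h1
  exact ⟨FreeGroup.mk r, h1, by rw [NoCancel, ← h1, hr.symm, h2]⟩

omit [DecidableEq α] in
theorem invRev_prefix_of_suffix {l m : List (α × Bool)} (h : l <:+ m) :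
    FreeGroup.invRev l <+: FreeGroup.invRev m := by
  obtain ⟨r, hr⟩ := h
  refine ⟨FreeGroup.invRev r, ?_⟩
  rw [← hr]
  simp [FreeGroup.invRev, List.reverse_append]

/-- The cancellation lemma: any product decomposes as `x = a·c`, `y = c⁻¹·b` with the
reduced word of `x·y` being the concatenation of those of `a` and `b`. -/
theorem cancelAux {N : ℕ} :
    ∀ n (x y : FreeGroup (Fin N)), x.toWord.length ≤ n →
    ∃ a c b : FreeGroup (Fin N), x = a * c ∧ y = c⁻¹ * b ∧
      x.toWord = a.toWord ++ c.toWord ∧ y.toWord = (c⁻¹).toWord ++ b.toWord ∧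
      (x * y).toWord = a.toWord ++ b.toWord := by
  intro n
  induction n with
  | zero =>
    intro x y hlen
    have hx : x = 1 := by
      rw [← FreeGroup.toWord_eq_nil_iff]
      exact List.length_eq_zero_iff.mp (Nat.le_zero.mp hlen)
    refine ⟨1, 1, y, by rw [hx, mul_one], by rw [inv_one, one_mul], ?_, ?_, ?_⟩
    · simp [hx]
    · simp
    · simp [hx]
  | succ n ih =>
    intro x y hlen
    rcases List.eq_nil_or_concat x.toWord with hx | ⟨xs, ℓ, hx⟩
    · have hx1 : x = 1 := FreeGroup.toWord_eq_nil_iff.mp hx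
      refine ⟨1, 1, y, by rw [hx1, mul_one], by rw [inv_one, one_mul], ?_, ?_, ?_⟩
      · simp [hx1]
      · simp
      · simp [hx1]
    by_cases hyn : y.toWord = []
    · have hy1 : y = 1 := FreeGroup.toWord_eq_nil_iff.mp hyn
      refine ⟨x, 1, 1, by rw [mul_one], by simp [hy1], by simp, by simp [hy1],
        by simp [hy1]⟩
    obtain ⟨m, ys, hyw⟩ := List.exists_cons_of_ne_nil hyn
    rw [List.concat_eq_append] at hx
    by_cases hcond : m = (ℓ.1, !ℓ.2)
    · -- cancellation at the junction; recurse
      obtain ⟨hxsplit, hxs, hℓ⟩ := split_of_toWord_eq_append hx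
      obtain ⟨hysplit, hm, hys⟩ :=
        split_of_toWord_eq_append (l := [m]) (m := ys) (by simpa using hyw)
      have hinv : (FreeGroup.mk [ℓ] : FreeGroup (Fin N))⁻¹ = FreeGroup.mk [m] := by
        rw [FreeGroup.inv_mk]
        congr 1
        simp [FreeGroup.invRev, hcond]
      have hxy : x * y = FreeGroup.mk xs * FreeGroup.mk ys := by
        rw [hxsplit, hysplit, ← hinv, mul_assoc, ← mul_assoc (FreeGroup.mk [ℓ]),
          mul_inv_cancel, one_mul]
      have hlen' : (FreeGroup.mk xs).toWord.length ≤ n := by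
        rw [hxs]
        have := hlen
        rw [hx, List.length_append, List.length_singleton] at this
        omega
      obtain ⟨a, c', b, ha, hb, haw, hbw, hw⟩ := ih (FreeGroup.mk xs) (FreeGroup.mk ys) hlen'
      refine ⟨a, c' * FreeGroup.mk [ℓ], b, ?_, ?_, ?_, ?_, ?_⟩
      · rw [hxsplit, ha, mul_assoc]
      · rw [hysplit, hb, mul_inv_rev, hinv, mul_assoc]
      · -- x.toWord = a.toWord ++ (c' * mk [ℓ]).toWord
        have haw' : xs = a.toWord ++ c'.toWord := by rw [← hxs]; exact haw
        have hcw : (c' * FreeGroup.mk [ℓ]).toWord = c'.toWord ++ [ℓ] := by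
          have hc : c' * FreeGroup.mk [ℓ] = FreeGroup.mk (c'.toWord ++ [ℓ]) := by
            rw [← FreeGroup.mul_mk, FreeGroup.mk_toWord]
          rw [hc]
          apply toWord_mk_of_rd
          apply rd_infix (rd_toWord x)
          exact ⟨a.toWord, [], by rw [hx, haw']; simp⟩
        rw [hcw, hx, haw', List.append_assoc]
      · -- y.toWord = ((c' * mk [ℓ])⁻¹).toWord ++ b.toWord
        have hbw' : ys = (c'⁻¹).toWord ++ b.toWord := by rw [← hys]; exact hbw
        have hcinv : (c' * FreeGroup.mk [ℓ])⁻¹ = FreeGroup.mk (m :: (c'⁻¹).toWord) := by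
          rw [mul_inv_rev, hinv]
          conv_lhs => rw [← FreeGroup.mk_toWord (x := c'⁻¹)]
          rw [FreeGroup.mul_mk, List.singleton_append]
        have hciw : ((c' * FreeGroup.mk [ℓ])⁻¹).toWord = m :: (c'⁻¹).toWord := by
          rw [hcinv]
          apply toWord_mk_of_rd
          apply rd_infix (rd_toWord y)
          exact ⟨[], b.toWord, by rw [hyw, hbw']; simp⟩
        rw [hciw, hyw, hbw', List.cons_append]
      · rw [hxy]
        exact hw
    · -- no cancellation at the junction
      refine ⟨x, 1, y, by rw [mul_one], by rw [inv_one, one_mul], by simp, by simp, ?_⟩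
      have hred : Rd (x.toWord ++ y.toWord) := by
        apply List.IsChain.append (rd_toWord x) (rd_toWord y)
        intro p hp q hq
        rw [hx, List.getLast?_concat] at hp
        rw [hyw, List.head?_cons] at hq
        simp only [Option.mem_def, Option.some.injEq] at hp hq
        subst hp; subst hq
        exact hcond
      have : x * y = FreeGroup.mk (x.toWord ++ y.toWord) := by
        rw [← FreeGroup.mul_mk, FreeGroup.mk_toWord, FreeGroup.mk_toWord]
      rw [this, toWord_mk_of_rd hred]

theorem cancel {N : ℕ} (x y : FreeGroup (Fin N)) :
    ∃ a c b : FreeGroup (Fin N), x = a * c ∧ y = c⁻¹ * b ∧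
      x.toWord = a.toWord ++ c.toWord ∧ y.toWord = (c⁻¹).toWord ++ b.toWord ∧
      (x * y).toWord = a.toWord ++ b.toWord :=
  cancelAux x.toWord.length x y le_rfl

omit [DecidableEq α] in
theorem rd_two {a b : α × Bool} (h : Rd [a, b]) : b ≠ (a.1, !a.2) :=
  (List.isChain_cons_cons.mp h).1

end Case3Aux

/-- Lemma "case3safety": if `u` is `ψ`-reduced with first letter `u₀`, and `v ≠ 1`
is fixed by `ψ` with neither `u` nor `u⁻¹` a prefix or suffix of `v`, then there is
a nonempty `v'''` with `u·v·u⁻¹ = u₀ * v''' * u₀⁻¹` without cancellation. -/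
theorem case3safety {N : ℕ} (hN : 2 ≤ N)
    (φ : MulAut (FreeGroup (Fin N))) (hpos : IsPositive φ) (hprim : IsPrimitive φ)
    (w : FreeGroup (Fin N)) (k : ℕ) (hk : 1 ≤ k)
    (ψ : FreeGroup (Fin N) → FreeGroup (Fin N))
    (hψ : ψ = fun x => w⁻¹ * (φ ^ k) x * w)
    (u : FreeGroup (Fin N)) (hu : PsiReduced ψ u)
    (v : FreeGroup (Fin N)) (hv : v ≠ 1) (hfix : ψ v = v)
    (h1 : ¬ IsPrefixOf u v) (h2 : ¬ IsPrefixOf u⁻¹ v)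
    (h3 : ¬ IsSuffixOf u v) (h4 : ¬ IsSuffixOf u⁻¹ v) :
    ∃ v''' : FreeGroup (Fin N), v''' ≠ 1 ∧
      ∃ f : Fin N × Bool, u.toWord.head? = some f ∧
        (u * v * u⁻¹).toWord = [f] ++ v'''.toWord ++ [(f.1, !f.2)] := by
  obtain ⟨hune, hufix, _hsign, hpre, _hsuf⟩ := hu
  have hψmul : ∀ a b : FreeGroup (Fin N), ψ (a * b) = ψ a * ψ b := by
    subst hψ
    intro a b
    show w⁻¹ * (φ ^ k) (a * b) * w = (w⁻¹ * (φ ^ k) a * w) * (w⁻¹ * (φ ^ k) b * w)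
    rw [map_mul]
    group
  have hψinv : ∀ a : FreeGroup (Fin N), ψ a⁻¹ = (ψ a)⁻¹ := by
    subst hψ
    intro a
    show w⁻¹ * (φ ^ k) a⁻¹ * w = (w⁻¹ * (φ ^ k) a * w)⁻¹
    rw [map_inv]
    group
  have hune' : u.toWord ≠ [] := fun h => hune (FreeGroup.toWord_eq_nil_iff.mp h)
  set Z := u * v * u⁻¹ with hZdef
  have hZfix : ψ Z = Z := by rw [hZdef, hψmul, hψmul, hψinv, hufix, hfix]
  have hZne : Z ≠ 1 := by
    intro h
    apply hv
    have hvz : v = u⁻¹ * Z * u := by rw [hZdef]; group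
    rw [h] at hvz
    rw [hvz]
    group
  have hZWne : Z.toWord ≠ [] := fun h => hZne (FreeGroup.toWord_eq_nil_iff.mp h)
  have hlenU : (u⁻¹).toWord.length = u.toWord.length := by
    rw [FreeGroup.toWord_inv, FreeGroup.invRev_length]
  have hpre' : ∀ g : FreeGroup (Fin N), ψ g = g → g ≠ 1 →
      g.toWord <+: u.toWord → g.toWord.length < u.toWord.length → False := by
    intro g hg hg1 hgp hlt
    exact hpre g hg1 (fun h => absurd hlt (by rw [h]; omega))
      (Case3Aux.isPrefixOf_of_prefix hgp) hg
  -- Step A: the first letter of Z is the first letter of u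
  have hhead : Z.toWord.head? = u.toWord.head? := by
    obtain ⟨a, c, b, hxac, hycb, hxw, hyw, hw⟩ := Case3Aux.cancel u (v * u⁻¹)
    have hZw : Z.toWord = a.toWord ++ b.toWord := by rw [hZdef, mul_assoc]; exact hw
    by_cases ha : a.toWord = []
    · exfalso
      have ha1 : a = 1 := FreeGroup.toWord_eq_nil_iff.mp ha
      rw [ha1, one_mul] at hxac
      have hbZ : b = Z := by
        rw [hZdef, mul_assoc, hycb, hxac, ← mul_assoc, mul_inv_cancel, one_mul]
      have hkey : (v * u⁻¹).toWord = (u⁻¹).toWord ++ Z.toWord := by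
        rw [hyw, hxac, hbZ]
      obtain ⟨a₂, c₂, b₂, hxac₂, hycb₂, hxw₂, hyw₂, hw₂⟩ := Case3Aux.cancel v u⁻¹
      have hE : (u⁻¹).toWord ++ Z.toWord = a₂.toWord ++ b₂.toWord := by
        rw [← hkey, hw₂]
      by_cases hb₂ : b₂.toWord = []
      · have hb1 : b₂ = 1 := FreeGroup.toWord_eq_nil_iff.mp hb₂
        rw [hb1, mul_one] at hycb₂
        have hc₂u : c₂ = u := inv_injective hycb₂.symm
        apply h3
        apply Case3Aux.isSuffixOf_of_suffix
        rw [hxw₂, hc₂u]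
        exact ⟨a₂.toWord, rfl⟩
      · by_cases hq : (u⁻¹).toWord.length ≤ a₂.toWord.length
        · apply h2
          apply Case3Aux.isPrefixOf_of_prefix
          have h5 : (u⁻¹).toWord <+: a₂.toWord :=
            List.prefix_of_prefix_length_le ⟨Z.toWord, hE⟩ ⟨b₂.toWord, rfl⟩ hq
          exact h5.trans ⟨c₂.toWord, hxw₂.symm⟩
        · push_neg at hq
          have hlen1 : (u⁻¹).toWord.length + Z.toWord.length
              = a₂.toWord.length + b₂.toWord.length := by
            have h6 := congrArg List.length hE
            simpa using h6
          have hlt : Z.toWord.length < b₂.toWord.length := by omega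
          have hZsuf : Z.toWord <:+ b₂.toWord :=
            List.suffix_of_suffix_length_le ⟨(u⁻¹).toWord, hE⟩ ⟨a₂.toWord, rfl⟩
              (le_of_lt hlt)
          have hb₂suf : b₂.toWord <:+ (u⁻¹).toWord := ⟨(c₂⁻¹).toWord, hyw₂.symm⟩
          have hZU : Z.toWord <:+ (u⁻¹).toWord := hZsuf.trans hb₂suf
          have hZiP : (Z⁻¹).toWord <+: u.toWord := by
            rw [FreeGroup.toWord_inv]
            have h7 := Case3Aux.invRev_prefix_of_suffix hZU
            rwa [FreeGroup.toWord_inv, FreeGroup.invRev_invRev] at h7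
          apply hpre' Z⁻¹ (by rw [hψinv, hZfix]) (inv_ne_one.mpr hZne) hZiP
          have hble : b₂.toWord.length ≤ (u⁻¹).toWord.length := hb₂suf.length_le
          rw [FreeGroup.toWord_inv, FreeGroup.invRev_length]
          omega
    · rw [hZw, List.head?_append_of_ne_nil _ ha, hxw, List.head?_append_of_ne_nil _ ha]
  -- Step B: the last letter of Z is the last letter of u⁻¹
  have hlast : Z.toWord.getLast? = (u⁻¹).toWord.getLast? := by
    obtain ⟨a, c, b, hxac, hycb, hxw, hyw, hw⟩ := Case3Aux.cancel (u * v) u⁻¹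
    have hZw : Z.toWord = a.toWord ++ b.toWord := by rw [hZdef]; exact hw
    by_cases hb : b.toWord = []
    · exfalso
      have hb1 : b = 1 := FreeGroup.toWord_eq_nil_iff.mp hb
      rw [hb1, mul_one] at hycb
      have hcu : c = u := inv_injective hycb.symm
      have haZ : a = Z := by
        rw [hZdef, hxac, hcu, mul_assoc, mul_inv_cancel, mul_one]
      have hkey : (u * v).toWord = Z.toWord ++ u.toWord := by
        rw [hxw, haZ, hcu]
      obtain ⟨a₃, c₃, b₃, hxac₃, hycb₃, hxw₃, hyw₃, hw₃⟩ := Case3Aux.cancel u v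
      have hE : Z.toWord ++ u.toWord = a₃.toWord ++ b₃.toWord := by
        rw [← hkey, hw₃]
      by_cases ha₃ : a₃.toWord = []
      · have ha1 : a₃ = 1 := FreeGroup.toWord_eq_nil_iff.mp ha₃
        rw [ha1, one_mul] at hxac₃
        apply h2
        apply Case3Aux.isPrefixOf_of_prefix
        rw [hyw₃, hxac₃]
        exact ⟨b₃.toWord, rfl⟩
      · by_cases hq : u.toWord.length ≤ b₃.toWord.length
        · apply h3
          apply Case3Aux.isSuffixOf_of_suffix
          have h5 : u.toWord <:+ b₃.toWord :=
            List.suffix_of_suffix_length_le ⟨Z.toWord, hE⟩ ⟨a₃.toWord, rfl⟩ hq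
          exact h5.trans ⟨(c₃⁻¹).toWord, hyw₃.symm⟩
        · push_neg at hq
          have hlen1 : Z.toWord.length + u.toWord.length
              = a₃.toWord.length + b₃.toWord.length := by
            have h6 := congrArg List.length hE
            simpa using h6
          have hlt : Z.toWord.length < a₃.toWord.length := by omega
          have hZpre : Z.toWord <+: a₃.toWord :=
            List.prefix_of_prefix_length_le ⟨u.toWord, hE⟩ ⟨b₃.toWord, rfl⟩ (le_of_lt hlt)
          have hpU : Z.toWord <+: u.toWord := hZpre.trans ⟨c₃.toWord, hxw₃.symm⟩
          apply hpre' Z hZfix hZne hpU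
          have ha₃le : a₃.toWord.length ≤ u.toWord.length :=
            List.IsPrefix.length_le ⟨c₃.toWord, hxw₃.symm⟩
          omega
    · have e1 : (a.toWord ++ b.toWord).getLast? = b.toWord.getLast? :=
        List.getLast?_append_of_ne_nil _ hb
      have e2 : ((c⁻¹).toWord ++ b.toWord).getLast? = b.toWord.getLast? :=
        List.getLast?_append_of_ne_nil _ hb
      rw [hZw, e1, hyw, e2]
  have hUinvLast : (u⁻¹).toWord.getLast? = (u.toWord.head?).map (fun f => (f.1, !f.2)) := by
    rw [FreeGroup.toWord_inv, FreeGroup.invRev, List.getLast?_reverse, List.head?_map]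
  -- assemble
  obtain ⟨u₀, rest, hUw⟩ := List.exists_cons_of_ne_nil hune'
  have hh : Z.toWord.head? = some u₀ := by rw [hhead, hUw]; rfl
  have hl : Z.toWord.getLast? = some (u₀.1, !u₀.2) := by
    rw [hlast, hUinvLast, hUw]
    rfl
  obtain ⟨z₀, zrest, hZw0⟩ := List.exists_cons_of_ne_nil hZWne
  have hz₀ : u₀ = z₀ := by
    rw [hZw0] at hh
    have := hh
    simp only [List.head?_cons, Option.some.injEq] at this
    exact this.symm
  subst hz₀
  rcases List.eq_nil_or_concat zrest with hzr | ⟨mid, lst, hzr⟩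
  · exfalso
    rw [hZw0, hzr] at hl
    have h8 : u₀ = (u₀.1, !u₀.2) := by simpa using hl
    have h9 : u₀.2 = !u₀.2 := congrArg Prod.snd h8
    simp at h9
  · rw [List.concat_eq_append] at hzr
    have hlst : lst = (u₀.1, !u₀.2) := by
      rw [hZw0, hzr, ← List.cons_append, List.getLast?_concat] at hl
      simpa using hl
    have hmidrd : Case3Aux.Rd mid :=
      Case3Aux.rd_infix (Case3Aux.rd_toWord Z) ⟨[u₀], [lst], by rw [hZw0, hzr]; simp⟩
    by_cases hmid : mid = []
    · exfalso
      have hRd := Case3Aux.rd_toWord Z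
      rw [hZw0, hzr, hmid] at hRd
      exact Case3Aux.rd_two hRd (by rw [hlst])
    · refine ⟨FreeGroup.mk mid, ?_, u₀, by rw [hUw]; rfl, ?_⟩
      · rw [Ne, ← FreeGroup.toWord_eq_nil_iff, Case3Aux.toWord_mk_of_rd hmidrd]
        exact hmid
      · rw [Case3Aux.toWord_mk_of_rd hmidrd, hZw0, hzr, hlst]
        simp
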